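/- Let f(z) = Σ_{k≥0} a_k z^k be analytic on the unit disk with |f(z)| ≤ 1, and let p ∈ (0,2]. Then |a_0|^p + |a_1| r ≤ 1 for all r with 0 ≤ r ≤ p/2. -/

import Mathlib

open Metric Set Complex

private lemma mobius_norm_lt {c w : ℂ} (hc : ‖c‖ < 1) (hw : ‖w‖ < 1) :
    ‖w - c‖ < ‖1 - (starRingEnd ℂ c) * w‖ := by
  have hc2 : Complex.normSq c < 1 := by
    rw [← Complex.sq_norm] at *; nlinarith [norm_nonneg c]
  have hw2 : Complex.normSq w < 1 := by
    rw [← Complex.sq_norm] at *; nlinarith [norm_nonneg w]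
  have key : Complex.normSq (1 - (starRingEnd ℂ c) * w) - Complex.normSq (w - c)
      = (1 - Complex.normSq c) * (1 - Complex.normSq w) := by
    simp only [Complex.normSq_apply, Complex.sub_re, Complex.sub_im, Complex.mul_re,
      Complex.mul_im, Complex.one_re, Complex.one_im, Complex.conj_re, Complex.conj_im]
    ring
  have h2 : Complex.normSq (w - c) < Complex.normSq (1 - (starRingEnd ℂ c) * w) := by nlinarith
  have := Complex.sq_norm (w - c)
  have := Complex.sq_norm (1 - (starRingEnd ℂ c) * w)
  nlinarith [norm_nonneg (w - c), norm_nonneg (1 - (starRingEnd ℂ c) * w)]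

theorem truncated_bohr_one (f : ℂ → ℂ) (a : ℕ → ℂ) (p : ℝ)
    (hf : ∀ z : ℂ, ‖z‖ < 1 → HasSum (fun k : ℕ => a k * z ^ k) (f z))
    (hb : ∀ z : ℂ, ‖z‖ < 1 → ‖f z‖ ≤ 1)
    (hp0 : 0 < p) (hp2 : p ≤ 2)
    (r : ℝ) (hr0 : 0 ≤ r) (hr : r ≤ p / 2) :
    ‖a 0‖ ^ p + ‖a 1‖ * r ≤ 1 := by
  -- f 0 = a 0
  have h00 : f 0 = a 0 := by
    have h1 := hf 0 (by norm_num)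
    have h2 : HasSum (fun k : ℕ => a k * (0:ℂ) ^ k) (a 0) := by
      have he : (fun k : ℕ => a k * (0:ℂ) ^ k) = fun k => if k = 0 then a 0 else 0 := by
        funext k; by_cases hk : k = 0 <;> simp [hk]
      rw [he]; exact hasSum_ite_eq 0 (a 0)
    exact h1.unique h2
  have ht1 : ‖a 0‖ ≤ 1 := h00 ▸ hb 0 (by norm_num)
  -- power series
  set P : FormalMultilinearSeries ℂ ℂ ℂ := FormalMultilinearSeries.ofScalars ℂ a with hPdef
  have hP : HasFPowerSeriesOnBall f P 0 1 := by
    refine ⟨?_, one_pos, ?_⟩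
    · refine ENNReal.le_of_forall_nnreal_lt fun q hq => ?_
      have hq1 : (q : ℝ) < 1 := by exact_mod_cast hq
      have hsum := hf (q : ℂ) (by simpa using hq1)
      refine P.le_radius_of_tendsto (l := 0) ?_
      have h0 : Filter.Tendsto (fun n : ℕ => ‖a n * (q:ℂ)^n‖) Filter.atTop (nhds 0) := by
        simpa using hsum.summable.tendsto_atTop_zero.norm
      refine h0.congr fun n => ?_
      rw [FormalMultilinearSeries.ofScalars_norm, norm_mul, norm_pow]
      norm_num
    · intro y hy
      have hy' : ‖y‖ < 1 := by
        rw [EMetric.mem_ball, edist_zero_right, enorm_eq_nnnorm, ← ENNReal.coe_one, ENNReal.coe_lt_coe] at hy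
        exact_mod_cast hy
      have he : (fun n : ℕ => P n fun _ => y) = fun n => a n * y ^ n := by
        funext n
        rw [hPdef, FormalMultilinearSeries.ofScalars_apply_eq, smul_eq_mul]
      rw [zero_add, he]
      exact hf y hy'
  -- differentiability and derivative
  have hball : Metric.eball (0:ℂ) 1 = ball (0:ℂ) 1 := by
    rw [← ENNReal.coe_one, Metric.emetric_ball_nnreal]; norm_num
  have hd : DifferentiableOn ℂ f (ball (0:ℂ) 1) := by
    have := hP.differentiableOn
    rwa [hball] at this
  have hderiv : deriv f 0 = a 1 := by
    rw [hP.hasFPowerSeriesAt.deriv]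
    show (FormalMultilinearSeries.ofScalars ℂ a).coeff 1 = a 1
    have : (FormalMultilinearSeries.ofScalars ℂ a).coeff 1
        = FormalMultilinearSeries.ofScalars ℂ a 1 (fun _ => (1:ℂ)) := rfl
    rw [this, FormalMultilinearSeries.ofScalars_apply_eq]
    simp
  -- key bound
  have hkey : ‖a 1‖ ≤ 1 - ‖a 0‖ ^ 2 := by
    by_cases hlt : ∀ z ∈ ball (0:ℂ) 1, ‖f z‖ < 1
    · -- Schwarz–Pick at 0
      have hc1 : ‖a 0‖ < 1 := h00 ▸ hlt 0 (mem_ball_self one_pos)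
      set c := a 0 with hc
      set q := (starRingEnd ℂ) c with hq
      set g : ℂ → ℂ := fun z => (f z - c) / (1 - q * f z) with hg
      have hnum : ∀ z ∈ ball (0:ℂ) 1, ‖f z - c‖ < ‖1 - q * f z‖ := by
        intro z hz
        exact mobius_norm_lt hc1 (hlt z hz)
      have hden : ∀ z ∈ ball (0:ℂ) 1, (1 - q * f z) ≠ 0 := by
        intro z hz h0
        have := hnum z hz
        rw [h0, norm_zero] at this
        exact absurd this (not_lt.mpr (norm_nonneg _))
      have hgd : DifferentiableOn ℂ g (ball (0:ℂ) 1) := by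
        exact DifferentiableOn.div (hd.sub_const c)
          ((differentiableOn_const 1).sub ((differentiableOn_const q).mul hd)) hden
      have hg0 : g 0 = 0 := by simp only [hg, h00, sub_self, zero_div]
      have hmaps : MapsTo g (ball (0:ℂ) 1) (ball (0:ℂ) 1) := by
        intro z hz
        rw [mem_ball_zero_iff, hg]
        have h1 := hnum z hz
        have h2 : 0 < ‖1 - q * f z‖ := lt_of_le_of_lt (norm_nonneg _) h1
        rw [norm_div, div_lt_one h2]
        exact h1
      have hsch : ‖deriv g 0‖ ≤ 1 := by
        have h := Complex.norm_deriv_le_one_of_mapsTo_ball (c := 0) (R := 1) hgd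
          (hmaps.mono_right (by rw [hg0]; exact ball_subset_closedBall))
          one_pos
        exact h
      -- compute deriv g 0
      have hfd' : DifferentiableAt ℂ f 0 :=
        hd.differentiableAt (isOpen_ball.mem_nhds (mem_ball_self one_pos))
      have hfd : HasDerivAt f (a 1) 0 := hderiv ▸ hfd'.hasDerivAt
      have hud : HasDerivAt (fun z => f z - c) (a 1) 0 := hfd.sub_const c
      have hvd : HasDerivAt (fun z => 1 - q * f z) (-(q * a 1)) 0 :=
        (hfd.const_mul q).const_sub 1
      have hv0 : (1 - q * f 0) ≠ 0 := hden 0 (by simp)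
      have hgderiv : HasDerivAt g
          ((a 1 * (1 - q * f 0) - (f 0 - c) * -(q * a 1)) / (1 - q * f 0) ^ 2) 0 :=
        hud.div hvd hv0
      have hv0' : (1 - q * c) ≠ 0 := by rwa [h00] at hv0
      have hval : deriv g 0 = a 1 / (1 - q * c) := by
        rw [hgderiv.deriv, h00]
        rw [sub_self, zero_mul, sub_zero, sq]
        rw [mul_comm (a 1) (1 - q * c), mul_div_mul_left _ _ hv0']
      have hqc : (1 - q * c) = ((1 - Complex.normSq c : ℝ) : ℂ) := by
        rw [hq]
        push_cast
        rw [Complex.normSq_eq_conj_mul_self]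
      have hns : Complex.normSq c = ‖c‖ ^ 2 := by
        rw [Complex.normSq_eq_norm_sq]
      have hnorm_qc : ‖1 - q * c‖ = 1 - ‖c‖ ^ 2 := by
        rw [hqc, Complex.norm_real, hns, Real.norm_eq_abs, _root_.abs_of_nonneg]
        nlinarith [norm_nonneg c]
      have h1 : ‖a 1‖ / (1 - ‖c‖ ^ 2) ≤ 1 := by
        rw [hval, norm_div, hnorm_qc] at hsch
        exact hsch
      have hpos : 0 < 1 - ‖c‖ ^ 2 := by nlinarith [norm_nonneg c]
      calc ‖a 1‖ = ‖a 1‖ / (1 - ‖c‖^2) * (1 - ‖c‖^2) := (div_mul_cancel₀ _ hpos.ne').symm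
        _ ≤ 1 * (1 - ‖c‖^2) := by
            exact mul_le_mul_of_nonneg_right h1 hpos.le
        _ = 1 - ‖c‖^2 := one_mul _
    · -- constant case: a 1 = 0
      push_neg at hlt
      obtain ⟨z₀, hz₀, hz₁⟩ := hlt
      have hz2 : ‖f z₀‖ = 1 := le_antisymm (hb z₀ (mem_ball_zero_iff.mp hz₀)) hz₁
      have hmax : IsMaxOn (norm ∘ f) (ball (0:ℂ) 1) z₀ := by
        intro z hz
        simp only [Function.comp_apply, hz2]
        exact hb z (mem_ball_zero_iff.mp hz)
      have heq := Complex.eqOn_of_isPreconnected_of_isMaxOn_norm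
        (convex_ball (0:ℂ) 1).isPreconnected isOpen_ball hd hz₀ hmax
      have ha1 : a 1 = 0 := by
        rw [← hderiv]
        have heq' : EqOn f (fun _ : ℂ => f z₀) (ball (0:ℂ) 1) := heq
        have h2 : deriv f 0 = deriv (fun _ : ℂ => f z₀) 0 := by
          apply Filter.EventuallyEq.deriv_eq
          exact Filter.eventuallyEq_of_mem (isOpen_ball.mem_nhds (by simp)) heq'
        rw [h2, deriv_const]
      rw [ha1, norm_zero]
      nlinarith [norm_nonneg (a 0)]
  -- final arithmetic
  have hber : ‖a 0‖ ^ p ≤ 1 - (p / 2) * (1 - ‖a 0‖ ^ 2) := by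
    have h1 : ‖a 0‖ ^ p = (‖a 0‖ ^ (2:ℕ)) ^ (p / 2) := by
      rw [← Real.rpow_natCast (‖a 0‖) 2, ← Real.rpow_mul (norm_nonneg _)]
      congr 1
      ring
    have h2 : (1 + (‖a 0‖ ^ (2:ℕ) - 1)) ^ (p/2) ≤ 1 + (p/2) * (‖a 0‖ ^ (2:ℕ) - 1) := by
      apply rpow_one_add_le_one_add_mul_self
      · nlinarith [sq_nonneg (‖a 0‖)]
      · linarith
      · linarith
    rw [h1]
    have h3 : (1 : ℝ) + (‖a 0‖ ^ (2:ℕ) - 1) = ‖a 0‖ ^ (2:ℕ) := by ring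
    rw [h3] at h2
    linarith
  have h4 : ‖a 1‖ * r ≤ (1 - ‖a 0‖ ^ 2) * (p / 2) := by
    apply mul_le_mul hkey hr hr0
    nlinarith [norm_nonneg (a 0)]
  linarith
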